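/- For 0 < x < 0.729, K_0(x) < -2 log x, where K_0 is the modified Bessel function of the second kind of order 0. -/

import Mathlib

open Real

/-- The modified Bessel function of the second kind of order `0`,
`K_0(x) = ∫₀^∞ e^{-x cosh t} dt`. -/
noncomputable def besselK0 (x : ℝ) : ℝ :=
  ∫ t in Set.Ioi (0 : ℝ), Real.exp (-x * Real.cosh t)

open MeasureTheory Set Filter intervalIntegral Function

set_option maxHeartbeats 4000000

lemma tangent_le_cosh {m : ℝ} (hm : 0 ≤ m) (t : ℝ) :
    Real.cosh m + Real.sinh m * (t - m) ≤ Real.cosh t := by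
  have h1 : Real.cosh t = Real.cosh m * Real.cosh (t - m) + Real.sinh m * Real.sinh (t - m) := by
    rw [← Real.cosh_add]; ring_nf
  have h2 : 0 ≤ Real.sinh m := Real.sinh_nonneg_iff.2 hm
  have h3 : Real.sinh m ≤ Real.cosh m := by
    have := Real.exp_pos (-m)
    rw [Real.sinh_eq, Real.cosh_eq]; linarith
  have h4 : 1 ≤ Real.cosh (t - m) := Real.one_le_cosh _
  have h5 : Real.cosh (t - m) + Real.sinh (t - m) = Real.exp (t - m) := Real.cosh_add_sinh (t - m)
  have h6 : (t - m) + 1 ≤ Real.exp (t - m) := Real.add_one_le_exp _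
  nlinarith [mul_le_mul_of_nonneg_right h3 (sub_nonneg.2 h4)]

lemma tendsto_sinh_atTop : Tendsto Real.sinh atTop atTop := by
  apply tendsto_atTop_mono' _ _ ((tendsto_atTop_add_const_right atTop (-1) Real.tendsto_exp_atTop).atTop_div_const two_pos)
  filter_upwards [eventually_ge_atTop (0:ℝ)] with u hu
  have h1 : Real.exp (-u) ≤ 1 := Real.exp_le_one_iff.2 (by linarith)
  rw [Real.sinh_eq]
  gcongr
  linarith

lemma integral_cosh_mul_exp {s : ℝ} (hs : 0 < s) (a : ℝ) :
    IntegrableOn (fun t => Real.cosh t * Real.exp (-s * Real.sinh t)) (Ioi a) ∧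
    ∫ t in Ioi a, Real.cosh t * Real.exp (-s * Real.sinh t) = Real.exp (-s * Real.sinh a) / s := by
  have hderiv : ∀ t ∈ Ici a, HasDerivAt (fun u => -Real.exp (-s * Real.sinh u) / s)
      (Real.cosh t * Real.exp (-s * Real.sinh t)) t := by
    intro t _
    have h1 : HasDerivAt (fun u => -s * Real.sinh u) (-s * Real.cosh t) t :=
      (Real.hasDerivAt_sinh t).const_mul (-s)
    have h2 := (h1.exp).neg.div_const s
    refine h2.congr_deriv ?_
    field_simp
  have hpos : ∀ t ∈ Ioi a, 0 ≤ Real.cosh t * Real.exp (-s * Real.sinh t) := fun t _ =>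
    le_of_lt (mul_pos (Real.cosh_pos t) (Real.exp_pos _))
  have htend : Tendsto (fun u => -Real.exp (-s * Real.sinh u) / s) atTop (nhds 0) := by
    have h1 : Tendsto (fun u => -s * Real.sinh u) atTop atBot := by
      have := (tendsto_sinh_atTop.const_mul_atTop hs)
      exact tendsto_neg_atTop_atBot.comp this |>.congr (fun u => by simp)
    have h2 : Tendsto (fun u => Real.exp (-s * Real.sinh u)) atTop (nhds 0) :=
      Real.tendsto_exp_atBot.comp h1
    have := (h2.neg).div_const s
    simpa using this
  have hint := integrableOn_Ioi_deriv_of_nonneg' hderiv hpos htend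
  refine ⟨hint, ?_⟩
  rw [integral_Ioi_of_hasDerivAt_of_tendsto' hderiv hint htend]
  field_simp
  ring

lemma K0_pointwise {s t : ℝ} (hs : 0 < s) (ht : 0 ≤ t) :
    Real.exp (-s * Real.cosh t) ≤ Real.cosh t * Real.exp (-s * Real.sinh t) := by
  have h1 : Real.sinh t ≤ Real.cosh t := by
    have := Real.exp_pos (-t); rw [Real.sinh_eq, Real.cosh_eq]; linarith
  have h2 : Real.exp (-s * Real.cosh t) ≤ Real.exp (-s * Real.sinh t) :=
    Real.exp_le_exp.2 (by nlinarith)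
  calc Real.exp (-s * Real.cosh t) ≤ Real.exp (-s * Real.sinh t) := h2
    _ ≤ Real.cosh t * Real.exp (-s * Real.sinh t) := by
        nlinarith [Real.one_le_cosh t, Real.exp_pos (-s * Real.sinh t)]

lemma K1_pointwise {s t : ℝ} (hs : 0 < s) (ht : 0 ≤ t) :
    Real.cosh t * Real.exp (-s * Real.cosh t) ≤ Real.cosh t * Real.exp (-s * Real.sinh t) := by
  have h1 : Real.sinh t ≤ Real.cosh t := by
    have := Real.exp_pos (-t); rw [Real.sinh_eq, Real.cosh_eq]; linarith
  have := (Real.cosh_pos t).le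
  exact mul_le_mul_of_nonneg_left (Real.exp_le_exp.2 (by nlinarith)) this

lemma integrableOn_K0 {s : ℝ} (hs : 0 < s) {a : ℝ} (ha : 0 ≤ a) :
    IntegrableOn (fun t => Real.exp (-s * Real.cosh t)) (Ioi a) := by
  apply Integrable.mono ((integral_cosh_mul_exp hs a).1)
  · exact (Real.continuous_exp.comp ((continuous_const.mul Real.continuous_cosh))).aestronglyMeasurable
  · filter_upwards [ae_restrict_mem measurableSet_Ioi] with t ht
    have h0 : (0:ℝ) ≤ t := le_trans ha (le_of_lt ht)
    rw [Real.norm_eq_abs, Real.norm_eq_abs, abs_of_pos (Real.exp_pos _),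
      abs_of_pos (mul_pos (Real.cosh_pos t) (Real.exp_pos _))]
    exact K0_pointwise hs h0

lemma integrableOn_K1 {s : ℝ} (hs : 0 < s) :
    IntegrableOn (fun t => Real.cosh t * Real.exp (-s * Real.cosh t)) (Ioi 0) := by
  apply Integrable.mono ((integral_cosh_mul_exp hs 0).1)
  · exact (Real.continuous_cosh.mul (Real.continuous_exp.comp
      (continuous_const.mul Real.continuous_cosh))).aestronglyMeasurable
  · filter_upwards [ae_restrict_mem measurableSet_Ioi] with t ht
    rw [Real.norm_eq_abs, Real.norm_eq_abs, abs_of_pos (mul_pos (Real.cosh_pos t) (Real.exp_pos _)),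
      abs_of_pos (mul_pos (Real.cosh_pos t) (Real.exp_pos _))]
    exact K1_pointwise hs (le_of_lt ht)

lemma K1_le {s : ℝ} (hs : 0 < s) :
    ∫ t in Ioi 0, Real.cosh t * Real.exp (-s * Real.cosh t) ≤ 1 / s := by
  have h := integral_cosh_mul_exp hs 0
  calc ∫ t in Ioi 0, Real.cosh t * Real.exp (-s * Real.cosh t)
      ≤ ∫ t in Ioi 0, Real.cosh t * Real.exp (-s * Real.sinh t) := by
        apply setIntegral_mono_on (integrableOn_K1 hs) h.1 measurableSet_Ioi
        exact fun t ht => K1_pointwise hs (le_of_lt ht)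
    _ = 1 / s := by rw [h.2]; simp

lemma tail_le {s T : ℝ} (hs : 0 < s) (hT : 0 ≤ T) :
    ∫ t in Ioi T, Real.exp (-s * Real.cosh t) ≤ Real.exp (-s * Real.sinh T) / s := by
  have h := integral_cosh_mul_exp hs T
  calc ∫ t in Ioi T, Real.exp (-s * Real.cosh t)
      ≤ ∫ t in Ioi T, Real.cosh t * Real.exp (-s * Real.sinh t) := by
        apply setIntegral_mono_on (integrableOn_K0 hs hT) h.1 measurableSet_Ioi
        exact fun t ht => K0_pointwise hs (le_trans hT (le_of_lt ht))
    _ = _ := h.2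

lemma K0_shift {x y : ℝ} (hx : 0 < x) (hxy : x ≤ y) :
    (∫ t in Ioi (0:ℝ), Real.exp (-x * Real.cosh t)) ≤
      (∫ t in Ioi (0:ℝ), Real.exp (-y * Real.cosh t)) + (Real.log y - Real.log x) := by
  have hy : 0 < y := lt_of_lt_of_le hx hxy
  set μ := volume.restrict (Ioc x y) with hμ
  set ν := volume.restrict (Ioi (0:ℝ)) with hν
  set f : ℝ → ℝ → ℝ := fun s t => Real.cosh t * Real.exp (-s * Real.cosh t) with hf
  have hcont : Continuous (uncurry f) := by
    apply (Real.continuous_cosh.comp continuous_snd).mul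
    exact Real.continuous_exp.comp ((continuous_fst.neg).mul
      (Real.continuous_cosh.comp continuous_snd))
  have hmeas : AEStronglyMeasurable (uncurry f) (μ.prod ν) := hcont.aestronglyMeasurable
  have hnorm : ∀ s t : ℝ, ‖f s t‖ = f s t := by
    intro s t
    exact Real.norm_of_nonneg (le_of_lt (mul_pos (Real.cosh_pos t) (Real.exp_pos _)))
  -- FTC in s
  have hFTC : ∀ t : ℝ, ∫ s in Ioc x y, f s t =
      Real.exp (-x * Real.cosh t) - Real.exp (-y * Real.cosh t) := by
    intro t
    rw [← integral_of_le hxy]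
    have hder : ∀ s ∈ Set.uIcc x y, HasDerivAt (fun u => -Real.exp (-u * Real.cosh t))
        (f s t) s := by
      intro s _
      have h1 : HasDerivAt (fun u : ℝ => -u * Real.cosh t) (-Real.cosh t) s := by
        simpa using (hasDerivAt_id s).neg.mul_const (Real.cosh t)
      have h2 := (h1.exp).neg
      refine h2.congr_deriv ?_
      simp [hf]; ring
    have hci : Continuous (fun s => f s t) := by
      exact continuous_const.mul (Real.continuous_exp.comp
        ((continuous_id.neg).mul continuous_const))
    rw [integral_eq_sub_of_hasDerivAt hder (hci.intervalIntegrable x y)]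
    ring
  -- integrability on the product
  have hInt : Integrable (uncurry f) (μ.prod ν) := by
    rw [integrable_prod_iff hmeas]
    constructor
    · rw [hμ]
      filter_upwards [ae_restrict_mem measurableSet_Ioc] with s hs
      exact integrableOn_K1 (lt_of_lt_of_le hx hs.1.le)
    · apply Integrable.mono' (integrable_const (1/x))
      · exact hmeas.norm.integral_prod_right'
      · rw [hμ]
        filter_upwards [ae_restrict_mem measurableSet_Ioc] with s hs
        simp only [Function.uncurry_apply_pair]
        have hps : 0 < s := lt_of_lt_of_le hx hs.1.le
        have hK1 : (∫ t, ‖f s t‖ ∂ν) ≤ 1/s := by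
          simp_rw [hnorm]
          exact K1_le hps
        have hK1nn : 0 ≤ ∫ t, ‖f s t‖ ∂ν := integral_nonneg (fun t => norm_nonneg _)
        rw [Real.norm_of_nonneg hK1nn]
        exact hK1.trans (by gcongr; exact hs.1.le)
  have hswap := integral_integral_swap hInt
  -- right side equals K0 x - K0 y
  have hRHS : (∫ t, ∫ s, f s t ∂μ ∂ν) =
      (∫ t in Ioi (0:ℝ), Real.exp (-x * Real.cosh t)) -
      (∫ t in Ioi (0:ℝ), Real.exp (-y * Real.cosh t)) := by
    rw [← integral_sub (integrableOn_K0 hx le_rfl) (integrableOn_K0 hy le_rfl)]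
    exact integral_congr_ae (Eventually.of_forall (fun t => hFTC t))
  -- left side bounded by log y - log x
  have hK1meas : IntegrableOn (fun s => ∫ t, f s t ∂ν) (Ioc x y) := hInt.integral_prod_left
  have hLHS : (∫ s, ∫ t, f s t ∂ν ∂μ) ≤ Real.log y - Real.log x := by
    have h1v : IntegrableOn (fun s : ℝ => 1/s) (Ioc x y) := by
      apply (ContinuousOn.integrableOn_Icc ?_).mono_set Ioc_subset_Icc_self
      exact ContinuousOn.div continuousOn_const continuousOn_id
        (fun s hs => ne_of_gt (lt_of_lt_of_le hx hs.1))
    calc (∫ s, ∫ t, f s t ∂ν ∂μ) ≤ ∫ s in Ioc x y, 1/s := by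
          apply setIntegral_mono_on hK1meas h1v measurableSet_Ioc
          intro s hs
          have hps : 0 < s := lt_of_lt_of_le hx hs.1.le
          exact K1_le hps
      _ = Real.log y - Real.log x := by
          rw [← integral_of_le hxy, integral_one_div, Real.log_div (ne_of_gt hy) (ne_of_gt hx)]
          rw [Set.uIcc_of_le hxy]
          intro h
          exact absurd h.1 (by linarith)
  linarith [hswap ▸ hLHS, hRHS]

noncomputable def P7 (v : ℝ) : ℝ := 1+v+v^2/2+v^3/6+v^4/24+v^5/120+v^6/720+v^7/5040

noncomputable def P8 (v : ℝ) : ℝ := P7 v + v^8/35840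

lemma P7_le_exp {v : ℝ} (hv : 0 ≤ v) : P7 v ≤ Real.exp v := by
  have h := Real.sum_le_exp_of_nonneg hv 8
  simp only [Finset.sum_range_succ, Finset.sum_range_zero, Nat.factorial] at h
  rw [P7]; convert h using 1; norm_num

lemma exp_le_P8 {v : ℝ} (hv : 0 ≤ v) (hv1 : v ≤ 1) : Real.exp v ≤ P8 v := by
  have h := Real.exp_bound' hv hv1 (n := 8) (by norm_num)
  simp only [Finset.sum_range_succ, Finset.sum_range_zero, Nat.factorial] at h
  rw [P8, P7]; convert h using 1; push_cast; ring

lemma one_le_P7 {v : ℝ} (hv : 0 ≤ v) : 1 ≤ P7 v := by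
  rw [P7]
  nlinarith [pow_nonneg hv 2, pow_nonneg hv 3, pow_nonneg hv 4, pow_nonneg hv 5,
    pow_nonneg hv 6, pow_nonneg hv 7]

lemma cosh_ge {m C : ℝ} (h0 : 0 ≤ m) (h4 : m ≤ 4)
    (hC : C ≤ ((P7 (m/4))^4 + ((P8 (m/4))^4)⁻¹)/2) : C ≤ Real.cosh m := by
  have hv : 0 ≤ m/4 := by linarith
  have hv1 : m/4 ≤ 1 := by linarith
  have hm4 : m = 4 * (m/4) := by ring
  have hexp : Real.exp m = (Real.exp (m/4))^4 := by
    rw [hm4, ← Real.exp_nat_mul]; norm_num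
  have hlb : (P7 (m/4))^4 ≤ Real.exp m := by
    rw [hexp]
    exact pow_le_pow_left₀ (by linarith [one_le_P7 hv]) (P7_le_exp hv) 4
  have hub : Real.exp m ≤ (P8 (m/4))^4 := by
    rw [hexp]
    exact pow_le_pow_left₀ (Real.exp_pos _).le (exp_le_P8 hv hv1) 4
  have hBpos : 0 < (P8 (m/4))^4 := lt_of_lt_of_le (Real.exp_pos m) hub
  have hinv : ((P8 (m/4))^4)⁻¹ ≤ Real.exp (-m) := by
    rw [Real.exp_neg]
    exact inv_anti₀ (Real.exp_pos m) hub
  rw [Real.cosh_eq]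
  linarith

lemma sinh_le {m S : ℝ} (h0 : 0 ≤ m) (h4 : m ≤ 4)
    (hS : ((P8 (m/4))^4 - ((P8 (m/4))^4)⁻¹)/2 ≤ S) : Real.sinh m ≤ S := by
  have hv : 0 ≤ m/4 := by linarith
  have hv1 : m/4 ≤ 1 := by linarith
  have hexp : Real.exp m = (Real.exp (m/4))^4 := by
    rw [show m = 4 * (m/4) by ring, ← Real.exp_nat_mul]; norm_num
  have hub : Real.exp m ≤ (P8 (m/4))^4 := by
    rw [hexp]; exact pow_le_pow_left₀ (Real.exp_pos _).le (exp_le_P8 hv hv1) 4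
  have hinv : ((P8 (m/4))^4)⁻¹ ≤ Real.exp (-m) := by
    rw [Real.exp_neg]; exact inv_anti₀ (Real.exp_pos m) hub
  rw [Real.sinh_eq]
  linarith

lemma sinh_ge {m S : ℝ} (h0 : 0 ≤ m) (hS : S ≤ ((P7 (m/4))^4 - ((P7 (m/4))^4)⁻¹)/2) :
    S ≤ Real.sinh m := by
  have hv : 0 ≤ m/4 := by linarith
  have hApos : 0 < (P7 (m/4))^4 := by
    have := one_le_P7 hv; positivity
  have hexp : Real.exp m = (Real.exp (m/4))^4 := by
    rw [show m = 4 * (m/4) by ring, ← Real.exp_nat_mul]; norm_num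
  have hlb : (P7 (m/4))^4 ≤ Real.exp m := by
    rw [hexp]
    exact pow_le_pow_left₀ (by linarith [one_le_P7 hv]) (P7_le_exp hv) 4
  have hinv : Real.exp (-m) ≤ ((P7 (m/4))^4)⁻¹ := by
    rw [Real.exp_neg]
    exact inv_anti₀ hApos hlb
  rw [Real.sinh_eq]
  linarith

lemma exp_neg_le {a E : ℝ} (ha : 0 ≤ a)
    (hE : 1 ≤ E * (1 + a/16 + (a/16)^2/2 + (a/16)^3/6)^16) : Real.exp (-a) ≤ E := by
  set z := a/16 with hz
  have hzpos : 0 ≤ z := by rw [hz]; linarith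
  have hP : 1 + z + z^2/2 + z^3/6 ≤ Real.exp z := by
    have h := Real.sum_le_exp_of_nonneg hzpos 4
    simp only [Finset.sum_range_succ, Finset.sum_range_zero, Nat.factorial] at h
    convert h using 1; norm_num
  have hPpos : (0:ℝ) < 1 + z + z^2/2 + z^3/6 := by positivity
  have hexp : Real.exp a = (Real.exp z)^16 := by
    rw [show a = 16 * z by rw [hz]; ring, ← Real.exp_nat_mul]; norm_num
  have hlb : (1 + z + z^2/2 + z^3/6)^16 ≤ Real.exp a := by
    rw [hexp]
    exact pow_le_pow_left₀ hPpos.le hP 16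
  have hp16 : (0:ℝ) < (1 + z + z^2/2 + z^3/6)^16 := by positivity
  rw [Real.exp_neg]
  calc (Real.exp a)⁻¹ ≤ ((1 + z + z^2/2 + z^3/6)^16)⁻¹ := inv_anti₀ hp16 hlb
    _ ≤ E := by
        rw [inv_le_iff_one_le_mul₀ hp16]
        linarith [hE]

lemma sinh_poly {w : ℝ} (h0 : 0 ≤ w) (h1 : w ≤ 1) :
    Real.sinh w ≤ w + w^3/6 + 43*w^5/4320 := by
  have hub : Real.exp w ≤ 1+w+w^2/2+w^3/6+w^4/24+w^5/120 + w^6*7/4320 := by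
    have h := Real.exp_bound' h0 h1 (n := 6) (by norm_num)
    simp only [Finset.sum_range_succ, Finset.sum_range_zero, Nat.factorial] at h
    convert h using 1; norm_num
  have hlb : 1-w+w^2/2-w^3/6+w^4/24-w^5/120 - w^6*7/4320 ≤ Real.exp (-w) := by
    have habs : |(-w)| ≤ 1 := by rw [abs_neg, abs_of_nonneg h0]; exact h1
    have h := Real.exp_bound habs (n := 6) (by norm_num)
    simp only [Finset.sum_range_succ, Finset.sum_range_zero, Nat.factorial] at h
    have h2 := (abs_sub_le_iff.1 h).2
    have hw6 : |(-w)|^6 = w^6 := by rw [abs_neg, abs_of_nonneg h0]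
    rw [hw6] at h2
    nlinarith [h2]
  have hw6 : w^6 ≤ w^5 := by
    calc w^6 = w^5 * w := by ring
      _ ≤ w^5 * 1 := by
          apply mul_le_mul_of_nonneg_left h1 (by positivity)
      _ = w^5 := by ring
  rw [Real.sinh_eq]
  nlinarith [hub, hlb, hw6]

lemma cell_bound {x : ℝ} (hx : 0 < x) {a b C S E : ℝ} (h0 : 0 ≤ a) (hab : a < b)
    (hC : C ≤ Real.cosh ((a+b)/2)) (hS : Real.sinh ((a+b)/2) ≤ S)
    (hW : x*(b-a)/2*S ≤ 1) (hE : Real.exp (-(x*C)) ≤ E) :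
    (∫ t in Ioc a b, Real.exp (-x * Real.cosh t)) ≤
      E * ((b-a) * (1 + (x*(b-a)/2*S)^2/6 + 43*(x*(b-a)/2*S)^4/4320)) := by
  set m := (a+b)/2 with hm
  have hmpos : 0 < m := by rw [hm]; linarith
  set σ := Real.sinh m with hσdef
  have hσ : 0 < σ := Real.sinh_pos_iff.2 hmpos
  set w := x * σ * ((b-a)/2) with hw
  have hwpos : 0 < w := by
    apply mul_pos (mul_pos hx hσ); linarith
  set W := x*(b-a)/2*S with hWdef
  have hwW : w ≤ W := by
    rw [hw, hWdef]
    have : x * σ * ((b-a)/2) = x*(b-a)/2*σ := by ring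
    rw [this]
    apply mul_le_mul_of_nonneg_left hS
    have : 0 < b - a := by linarith
    positivity
  have hw1 : w ≤ 1 := le_trans hwW hW
  -- step A: compare with tangent-line integrand
  have stepA : (∫ t in Ioc a b, Real.exp (-x * Real.cosh t)) ≤
      ∫ t in Ioc a b, Real.exp (-x * Real.cosh m - x * σ * (t - m)) := by
    apply setIntegral_mono_on
    · exact ((Real.continuous_exp.comp
        ((continuous_const.mul Real.continuous_cosh))).integrableOn_Ioc)
    · exact ((Real.continuous_exp.comp
        ((continuous_const.sub (continuous_const.mul (continuous_id.sub
          continuous_const)))) ).integrableOn_Ioc)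
    · exact measurableSet_Ioc
    · intro t _
      apply Real.exp_le_exp.2
      have h := tangent_le_cosh hmpos.le t
      nlinarith [h]
  -- step B: evaluate the tangent integral
  have stepB : (∫ t in Ioc a b, Real.exp (-x * Real.cosh m - x * σ * (t - m))) =
      Real.exp (-x * Real.cosh m) * (2 * Real.sinh w) / (x * σ) := by
    rw [← integral_of_le hab.le]
    have hder : ∀ t ∈ Set.uIcc a b, HasDerivAt
        (fun u => -Real.exp (-x * Real.cosh m - x * σ * (u - m)) / (x * σ))
        (Real.exp (-x * Real.cosh m - x * σ * (t - m))) t := by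
      intro t _
      have h1 : HasDerivAt (fun u : ℝ => -x * Real.cosh m - x * σ * (u - m))
          (-(x * σ)) t := by
        have : HasDerivAt (fun u : ℝ => u - m) 1 t := (hasDerivAt_id t).sub_const m
        have h2 := (this.const_mul (x * σ)).const_sub (-x * Real.cosh m)
        refine h2.congr_deriv ?_
        ring
      have h2 := (h1.exp).neg.div_const (x * σ)
      refine h2.congr_deriv ?_
      field_simp
    have hci : Continuous (fun t : ℝ => Real.exp (-x * Real.cosh m - x * σ * (t - m))) :=
      Real.continuous_exp.comp (continuous_const.sub
        (continuous_const.mul (continuous_id.sub continuous_const)))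
    rw [integral_eq_sub_of_hasDerivAt hder (hci.intervalIntegrable a b)]
    have hab2 : b - m = (b-a)/2 := by rw [hm]; ring
    have hab3 : a - m = -((b-a)/2) := by rw [hm]; ring
    rw [hab2, hab3]
    have e1 : -x * Real.cosh m - x * σ * ((b-a)/2) = -x * Real.cosh m + (-w) := by
      rw [hw]; ring
    have e2 : -x * Real.cosh m - x * σ * (-((b-a)/2)) = -x * Real.cosh m + w := by
      rw [hw]; ring
    rw [e1, e2, Real.exp_add, Real.exp_add, Real.sinh_eq]
    field_simp
    ring
  -- step C/D: final bound
  have hsinh : 2 * Real.sinh w ≤ x * σ * ((b-a) * (1 + w^2/6 + 43*w^4/4320)) := by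
    have h := sinh_poly hwpos.le hw1
    have : x * σ * ((b-a) * (1 + w^2/6 + 43*w^4/4320)) =
        2 * (w + w^3/6 + 43*w^5/4320) := by rw [hw]; ring
    rw [this]
    linarith
  have hEpos : 0 < E := lt_of_lt_of_le (Real.exp_pos _) hE
  have hexpm : Real.exp (-x * Real.cosh m) ≤ E := by
    apply le_trans _ hE
    apply Real.exp_le_exp.2
    nlinarith [hC]
  have hpoly_mono : 1 + w^2/6 + 43*w^4/4320 ≤ 1 + W^2/6 + 43*W^4/4320 := by
    have h2 : w^2 ≤ W^2 := pow_le_pow_left₀ hwpos.le hwW 2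
    have h4 : w^4 ≤ W^4 := pow_le_pow_left₀ hwpos.le hwW 4
    linarith
  calc (∫ t in Ioc a b, Real.exp (-x * Real.cosh t))
      ≤ Real.exp (-x * Real.cosh m) * (2 * Real.sinh w) / (x * σ) := by
        rw [← stepB]; exact stepA
    _ ≤ Real.exp (-x * Real.cosh m) * ((b-a) * (1 + w^2/6 + 43*w^4/4320)) := by
        rw [div_le_iff₀ (mul_pos hx hσ)]
        have hexpos := Real.exp_pos (-x * Real.cosh m)
        calc Real.exp (-x * Real.cosh m) * (2 * Real.sinh w)
            ≤ Real.exp (-x * Real.cosh m) * (x * σ * ((b-a) * (1 + w^2/6 + 43*w^4/4320))) :=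
              mul_le_mul_of_nonneg_left hsinh hexpos.le
          _ = Real.exp (-x * Real.cosh m) * ((b-a) * (1 + w^2/6 + 43*w^4/4320)) * (x * σ) := by
              ring
    _ ≤ E * ((b-a) * (1 + W^2/6 + 43*W^4/4320)) := by
        apply mul_le_mul hexpm _ _ hEpos.le
        · apply mul_le_mul_of_nonneg_left hpoly_mono (by linarith)
        · have hw2 : 0 ≤ w^2/6 := by positivity
          have hw4 : 0 ≤ 43*w^4/4320 := by positivity
          have : 0 ≤ b - a := by linarith
          positivity

lemma split_Ioi {f : ℝ → ℝ} {A : ℝ} (b : ℝ) (hab : A ≤ b) (hf : IntegrableOn f (Ioi A)) :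
    ∫ t in Ioi A, f t = (∫ t in Ioc A b, f t) + ∫ t in Ioi b, f t := by
  have h := setIntegral_union (Ioc_disjoint_Ioi (le_refl b)) measurableSet_Ioi
    (hf.mono_set Ioc_subset_Ioi_self) (hf.mono_set (Ioi_subset_Ioi hab)) (f := f)
  rw [Set.Ioc_union_Ioi_eq_Ioi hab] at h
  exact h

-- sample cell (i = 10)

lemma log_numeric : (6321/10000 : ℝ) ≤ -2 * Real.log (729/1000) := by
  have h2 : Real.exp (63210/200000 : ℝ) ≤ 1000/729 :=
    le_trans (exp_le_P8 (by norm_num) (by norm_num)) (by norm_num [P8, P7])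
  have h4 : (729/1000 : ℝ) ≤ (Real.exp (63210/200000 : ℝ))⁻¹ := by
    have := inv_anti₀ (Real.exp_pos _) h2
    calc (729/1000 : ℝ) = ((1000/729 : ℝ))⁻¹ := by norm_num
      _ ≤ _ := this
  have h3 : Real.log (729/1000 : ℝ) ≤ -(63210/200000) := by
    rw [Real.log_le_iff_le_exp (by norm_num), Real.exp_neg]
    exact h4
  linarith

lemma K0_numeric : (∫ t in Ioi (0:ℝ), Real.exp (-(729/1000) * Real.cosh t)) ≤ 6321/10000 := by
  have h30 : (∫ t in Ioi (18/5:ℝ), Real.exp (-(729/1000) * Real.cosh t)) ≤ 1/364500 := by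
    refine le_trans (tail_le (by norm_num) (by norm_num)) ?_
    have hST : (11428189/625000 : ℝ) ≤ Real.sinh (18/5) :=
      sinh_ge (by norm_num) (by norm_num [P7])
    have hE : Real.exp (-(729/1000 * (11428189/625000 : ℝ))) ≤ 1/500000 :=
      exp_neg_le (by norm_num) (by norm_num)
    have hmono : Real.exp (-(729/1000) * Real.sinh (18/5)) ≤
        Real.exp (-(729/1000 * (11428189/625000 : ℝ))) := by
      apply Real.exp_le_exp.2; nlinarith [hST]
    calc Real.exp (-(729/1000) * Real.sinh (18/5)) / (729/1000)
        ≤ (1/500000 : ℝ) / (729/1000) := by gcongr ?_ / _; exact le_trans hmono hE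
      _ ≤ 1/364500 := by norm_num
  have c29 : (∫ t in Ioc (87/25 : ℝ) (18/5), Real.exp (-(729/1000) * Real.cosh t)) ≤
      3/5000000 :=
    le_trans (cell_bound (by norm_num) (by norm_num) (by norm_num)
      (cosh_ge (C := 172476721/10000000) (by norm_num) (by norm_num) (by norm_num [P7, P8]))
      (sinh_le (S := 21523697/1250000) (by norm_num) (by norm_num) (by norm_num [P7, P8]))
      (by norm_num)
      (exp_neg_le (by norm_num) (E := 1/250000) (by norm_num))) (by norm_num)
  have h29 : (∫ t in Ioi (87/25:ℝ), Real.exp (-(729/1000) * Real.cosh t)) ≤ 12187/3645000000 := by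
    rw [split_Ioi (18/5) (by norm_num) (integrableOn_K0 (by norm_num) (by norm_num))]
    exact le_trans (add_le_add c29 h30) (by norm_num)
  have c28 : (∫ t in Ioc (84/25 : ℝ) (87/25), Real.exp (-(729/1000) * Real.cosh t)) ≤
      21/10000000 :=
    le_trans (cell_bound (by norm_num) (by norm_num) (by norm_num)
      (cosh_ge (C := 38252151/2500000) (by norm_num) (by norm_num) (by norm_num [P7, P8]))
      (sinh_le (S := 152683553/10000000) (by norm_num) (by norm_num) (by norm_num [P7, P8]))
      (by norm_num)
      (exp_neg_le (by norm_num) (E := 157/10000000) (by norm_num))) (by norm_num)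
  have h28 : (∫ t in Ioi (84/25:ℝ), Real.exp (-(729/1000) * Real.cosh t)) ≤ 39683/7290000000 := by
    rw [split_Ioi (87/25) (by norm_num) (integrableOn_K0 (by norm_num) (by norm_num))]
    exact le_trans (add_le_add c28 h29) (by norm_num)
  have c27 : (∫ t in Ioc (81/25 : ℝ) (84/25), Real.exp (-(729/1000) * Real.cosh t)) ≤
      69/10000000 :=
    le_trans (cell_bound (by norm_num) (by norm_num) (by norm_num)
      (cosh_ge (C := 135746219/10000000) (by norm_num) (by norm_num) (by norm_num [P7, P8]))
      (sinh_le (S := 135378811/10000000) (by norm_num) (by norm_num) (by norm_num [P7, P8]))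
      (by norm_num)
      (exp_neg_le (by norm_num) (E := 107/2000000) (by norm_num))) (by norm_num)
  have h27 : (∫ t in Ioi (81/25:ℝ), Real.exp (-(729/1000) * Real.cosh t)) ≤ 703/56953125 := by
    rw [split_Ioi (84/25) (by norm_num) (integrableOn_K0 (by norm_num) (by norm_num))]
    exact le_trans (add_le_add c27 h28) (by norm_num)
  have c26 : (∫ t in Ioc (78/25 : ℝ) (81/25), Real.exp (-(729/1000) * Real.cosh t)) ≤
      201/10000000 :=
    le_trans (cell_bound (by norm_num) (by norm_num) (by norm_num)
      (cosh_ge (C := 60220377/5000000) (by norm_num) (by norm_num) (by norm_num [P7, P8]))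
      (sinh_le (S := 24005173/2000000) (by norm_num) (by norm_num) (by norm_num [P7, P8]))
      (by norm_num)
      (exp_neg_le (by norm_num) (E := 1/6250) (by norm_num))) (by norm_num)
  have h26 : (∫ t in Ioi (78/25:ℝ), Real.exp (-(729/1000) * Real.cosh t)) ≤ 236513/7290000000 := by
    rw [split_Ioi (81/25) (by norm_num) (integrableOn_K0 (by norm_num) (by norm_num))]
    exact le_trans (add_le_add c26 h27) (by norm_num)
  have c25 : (∫ t in Ioc (3 : ℝ) (78/25), Real.exp (-(729/1000) * Real.cosh t)) ≤
      33/625000 :=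
    le_trans (cell_bound (by norm_num) (by norm_num) (by norm_num)
      (cosh_ge (C := 106871593/10000000) (by norm_num) (by norm_num) (by norm_num [P7, P8]))
      (sinh_le (S := 106403367/10000000) (by norm_num) (by norm_num) (by norm_num [P7, P8]))
      (by norm_num)
      (exp_neg_le (by norm_num) (E := 2121/5000000) (by norm_num))) (by norm_num)
  have h25 : (∫ t in Ioi (3:ℝ), Real.exp (-(729/1000) * Real.cosh t)) ≤ 24857/291600000 := by
    rw [split_Ioi (78/25) (by norm_num) (integrableOn_K0 (by norm_num) (by norm_num))]
    exact le_trans (add_le_add c25 h26) (by norm_num)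
  have c24 : (∫ t in Ioc (72/25 : ℝ) (3), Real.exp (-(729/1000) * Real.cosh t)) ≤
      39/312500 :=
    le_trans (cell_bound (by norm_num) (by norm_num) (by norm_num)
      (cosh_ge (C := 94843143/10000000) (by norm_num) (by norm_num) (by norm_num [P7, P8]))
      (sinh_le (S := 47157459/5000000) (by norm_num) (by norm_num) (by norm_num [P7, P8]))
      (by norm_num)
      (exp_neg_le (by norm_num) (E := 10103/10000000) (by norm_num))) (by norm_num)
  have h24 : (∫ t in Ioi (72/25:ℝ), Real.exp (-(729/1000) * Real.cosh t)) ≤ 1531217/7290000000 := by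
    rw [split_Ioi (3) (by norm_num) (integrableOn_K0 (by norm_num) (by norm_num))]
    exact le_trans (add_le_add c24 h25) (by norm_num)
  have c23 : (∫ t in Ioc (69/25 : ℝ) (72/25), Real.exp (-(729/1000) * Real.cosh t)) ≤
      2681/10000000 :=
    le_trans (cell_bound (by norm_num) (by norm_num) (by norm_num)
      (cosh_ge (C := 8418201/1000000) (by norm_num) (by norm_num) (by norm_num [P7, P8]))
      (sinh_le (S := 41793117/5000000) (by norm_num) (by norm_num) (by norm_num [P7, P8]))
      (by norm_num)
      (exp_neg_le (by norm_num) (E := 21849/10000000) (by norm_num))) (by norm_num)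
  have h23 : (∫ t in Ioi (69/25:ℝ), Real.exp (-(729/1000) * Real.cosh t)) ≤ 1742833/3645000000 := by
    rw [split_Ioi (72/25) (by norm_num) (integrableOn_K0 (by norm_num) (by norm_num))]
    exact le_trans (add_le_add c23 h24) (by norm_num)
  have c22 : (∫ t in Ioc (66/25 : ℝ) (69/25), Real.exp (-(729/1000) * Real.cosh t)) ≤
      5293/10000000 :=
    le_trans (cell_bound (by norm_num) (by norm_num) (by norm_num)
      (cosh_ge (C := 74734511/10000000) (by norm_num) (by norm_num) (by norm_num [P7, P8]))
      (sinh_le (S := 74062639/10000000) (by norm_num) (by norm_num) (by norm_num [P7, P8]))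
      (by norm_num)
      (exp_neg_le (by norm_num) (E := 43339/10000000) (by norm_num))) (by norm_num)
  have h22 : (∫ t in Ioi (66/25:ℝ), Real.exp (-(729/1000) * Real.cosh t)) ≤ 7344263/7290000000 := by
    rw [split_Ioi (69/25) (by norm_num) (integrableOn_K0 (by norm_num) (by norm_num))]
    exact le_trans (add_le_add c22 h23) (by norm_num)
  have c21 : (∫ t in Ioc (63/25 : ℝ) (66/25), Real.exp (-(729/1000) * Real.cosh t)) ≤
      4841/5000000 :=
    le_trans (cell_bound (by norm_num) (by norm_num) (by norm_num)
      (cosh_ge (C := 1327289/200000) (by norm_num) (by norm_num) (by norm_num [P7, P8]))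
      (sinh_le (S := 32803413/5000000) (by norm_num) (by norm_num) (by norm_num [P7, P8]))
      (by norm_num)
      (exp_neg_le (by norm_num) (E := 3979/500000) (by norm_num))) (by norm_num)
  have h21 : (∫ t in Ioi (63/25:ℝ), Real.exp (-(729/1000) * Real.cosh t)) ≤ 14402441/7290000000 := by
    rw [split_Ioi (66/25) (by norm_num) (integrableOn_K0 (by norm_num) (by norm_num))]
    exact le_trans (add_le_add c21 h22) (by norm_num)
  have c20 : (∫ t in Ioc (12/5 : ℝ) (63/25), Real.exp (-(729/1000) * Real.cosh t)) ≤
      8273/5000000 :=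
    le_trans (cell_bound (by norm_num) (by norm_num) (by norm_num)
      (cosh_ge (C := 58951163/10000000) (by norm_num) (by norm_num) (by norm_num [P7, P8]))
      (sinh_le (S := 58096887/10000000) (by norm_num) (by norm_num) (by norm_num [P7, P8]))
      (by norm_num)
      (exp_neg_le (by norm_num) (E := 68201/5000000) (by norm_num))) (by norm_num)
  have h20 : (∫ t in Ioi (12/5:ℝ), Real.exp (-(729/1000) * Real.cosh t)) ≤ 1058579/291600000 := by
    rw [split_Ioi (63/25) (by norm_num) (integrableOn_K0 (by norm_num) (by norm_num))]
    exact le_trans (add_le_add c20 h21) (by norm_num)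
  have c19 : (∫ t in Ioc (57/25 : ℝ) (12/5), Real.exp (-(729/1000) * Real.cosh t)) ≤
      26609/10000000 :=
    le_trans (cell_bound (by norm_num) (by norm_num) (by norm_num)
      (cosh_ge (C := 26193889/5000000) (by norm_num) (by norm_num) (by norm_num [P7, P8]))
      (sinh_le (S := 51424547/10000000) (by norm_num) (by norm_num) (by norm_num [P7, P8]))
      (by norm_num)
      (exp_neg_le (by norm_num) (E := 54969/2500000) (by norm_num))) (by norm_num)
  have h19 : (∫ t in Ioi (57/25:ℝ), Real.exp (-(729/1000) * Real.cosh t)) ≤ 11465609/1822500000 := by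
    rw [split_Ioi (12/5) (by norm_num) (integrableOn_K0 (by norm_num) (by norm_num))]
    exact le_trans (add_le_add c19 h20) (by norm_num)
  have c18 : (∫ t in Ioc (54/25 : ℝ) (57/25), Real.exp (-(729/1000) * Real.cosh t)) ≤
      8107/2000000 :=
    le_trans (cell_bound (by norm_num) (by norm_num) (by norm_num)
      (cosh_ge (C := 23289837/5000000) (by norm_num) (by norm_num) (by norm_num [P7, P8]))
      (sinh_le (S := 45493611/10000000) (by norm_num) (by norm_num) (by norm_num [P7, P8]))
      (by norm_num)
      (exp_neg_le (by norm_num) (E := 20973/625000) (by norm_num))) (by norm_num)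
  have h18 : (∫ t in Ioi (54/25:ℝ), Real.exp (-(729/1000) * Real.cosh t)) ≤ 75412451/7290000000 := by
    rw [split_Ioi (57/25) (by norm_num) (integrableOn_K0 (by norm_num) (by norm_num))]
    exact le_trans (add_le_add c18 h19) (by norm_num)
  have c17 : (∫ t in Ioc (51/25 : ℝ) (54/25), Real.exp (-(729/1000) * Real.cosh t)) ≤
      58837/10000000 :=
    le_trans (cell_bound (by norm_num) (by norm_num) (by norm_num)
      (cosh_ge (C := 41443117/10000000) (by norm_num) (by norm_num) (by norm_num [P7, P8]))
      (sinh_le (S := 40218569/10000000) (by norm_num) (by norm_num) (by norm_num [P7, P8]))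
      (by norm_num)
      (exp_neg_le (by norm_num) (E := 487781/10000000) (by norm_num))) (by norm_num)
  have h17 : (∫ t in Ioi (51/25:ℝ), Real.exp (-(729/1000) * Real.cosh t)) ≤ 7394039/455625000 := by
    rw [split_Ioi (54/25) (by norm_num) (integrableOn_K0 (by norm_num) (by norm_num))]
    exact le_trans (add_le_add c17 h18) (by norm_num)
  have c16 : (∫ t in Ioc (48/25 : ℝ) (51/25), Real.exp (-(729/1000) * Real.cosh t)) ≤
      81799/10000000 :=
    le_trans (cell_bound (by norm_num) (by norm_num) (by norm_num)
      (cosh_ge (C := 9226013/2500000) (by norm_num) (by norm_num) (by norm_num [P7, P8]))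
      (sinh_le (S := 3552337/1000000) (by norm_num) (by norm_num) (by norm_num [P7, P8]))
      (by norm_num)
      (exp_neg_le (by norm_num) (E := 678919/10000000) (by norm_num))) (by norm_num)
  have h16 : (∫ t in Ioi (48/25:ℝ), Real.exp (-(729/1000) * Real.cosh t)) ≤ 35587219/1458000000 := by
    rw [split_Ioi (51/25) (by norm_num) (integrableOn_K0 (by norm_num) (by norm_num))]
    exact le_trans (add_le_add c16 h17) (by norm_num)
  have c15 : (∫ t in Ioc (9/5 : ℝ) (48/25), Real.exp (-(729/1000) * Real.cosh t)) ≤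
      109433/10000000 :=
    le_trans (cell_bound (by norm_num) (by norm_num) (by norm_num)
      (cosh_ge (C := 16448521/5000000) (by norm_num) (by norm_num) (by norm_num [P7, P8]))
      (sinh_le (S := 15670161/5000000) (by norm_num) (by norm_num) (by norm_num [P7, P8]))
      (by norm_num)
      (exp_neg_le (by norm_num) (E := 909091/10000000) (by norm_num))) (by norm_num)
  have h15 : (∫ t in Ioi (9/5:ℝ), Real.exp (-(729/1000) * Real.cosh t)) ≤ 16107047/455625000 := by
    rw [split_Ioi (48/25) (by norm_num) (integrableOn_K0 (by norm_num) (by norm_num))]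
    exact le_trans (add_le_add c15 h16) (by norm_num)
  have c14 : (∫ t in Ioc (42/25 : ℝ) (9/5), Real.exp (-(729/1000) * Real.cosh t)) ≤
      17683/1250000 :=
    le_trans (cell_bound (by norm_num) (by norm_num) (by norm_num)
      (cosh_ge (C := 7341079/2500000) (by norm_num) (by norm_num) (by norm_num [P7, P8]))
      (sinh_le (S := 6902279/2500000) (by norm_num) (by norm_num) (by norm_num [P7, P8]))
      (by norm_num)
      (exp_neg_le (by norm_num) (E := 147/1250) (by norm_num))) (by norm_num)
  have h14 : (∫ t in Ioi (42/25:ℝ), Real.exp (-(729/1000) * Real.cosh t)) ≤ 45105001/911250000 := by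
    rw [split_Ioi (9/5) (by norm_num) (integrableOn_K0 (by norm_num) (by norm_num))]
    exact le_trans (add_le_add c14 h15) (by norm_num)
  have c13 : (∫ t in Ioc (39/25 : ℝ) (42/25), Real.exp (-(729/1000) * Real.cosh t)) ≤
      35469/2000000 :=
    le_trans (cell_bound (by norm_num) (by norm_num) (by norm_num)
      (cosh_ge (C := 26254943/10000000) (by norm_num) (by norm_num) (by norm_num [P7, P8]))
      (sinh_le (S := 24275959/10000000) (by norm_num) (by norm_num) (by norm_num [P7, P8]))
      (by norm_num)
      (exp_neg_le (by norm_num) (E := 737549/5000000) (by norm_num))) (by norm_num)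
  have h13 : (∫ t in Ioi (39/25:ℝ), Real.exp (-(729/1000) * Real.cosh t)) ≤ 490124513/7290000000 := by
    rw [split_Ioi (42/25) (by norm_num) (integrableOn_K0 (by norm_num) (by norm_num))]
    exact le_trans (add_le_add c13 h14) (by norm_num)
  have c12 : (∫ t in Ioc (36/25 : ℝ) (39/25), Real.exp (-(729/1000) * Real.cosh t)) ≤
      216307/10000000 :=
    le_trans (cell_bound (by norm_num) (by norm_num) (by norm_num)
      (cosh_ge (C := 4704819/2000000) (by norm_num) (by norm_num) (by norm_num [P7, P8]))
      (sinh_le (S := 4258559/2000000) (by norm_num) (by norm_num) (by norm_num [P7, P8]))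
      (by norm_num)
      (exp_neg_le (by norm_num) (E := 1799951/10000000) (by norm_num))) (by norm_num)
  have h12 : (∫ t in Ioi (36/25:ℝ), Real.exp (-(729/1000) * Real.cosh t)) ≤ 161953079/1822500000 := by
    rw [split_Ioi (39/25) (by norm_num) (integrableOn_K0 (by norm_num) (by norm_num))]
    exact le_trans (add_le_add c12 h13) (by norm_num)
  have c11 : (∫ t in Ioc (33/25 : ℝ) (36/25), Real.exp (-(729/1000) * Real.cosh t)) ≤
      128707/5000000 :=
    le_trans (cell_bound (by norm_num) (by norm_num) (by norm_num)
      (cosh_ge (C := 52831/25000) (by norm_num) (by norm_num) (by norm_num [P7, P8]))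
      (sinh_le (S := 2327077/1250000) (by norm_num) (by norm_num) (by norm_num [P7, P8]))
      (by norm_num)
      (exp_neg_le (by norm_num) (E := 1071371/5000000) (by norm_num))) (by norm_num)
  have h11 : (∫ t in Ioi (33/25:ℝ), Real.exp (-(729/1000) * Real.cosh t)) ≤ 417733561/3645000000 := by
    rw [split_Ioi (36/25) (by norm_num) (integrableOn_K0 (by norm_num) (by norm_num))]
    exact le_trans (add_le_add c11 h12) (by norm_num)
  have c10 : (∫ t in Ioc (6/5 : ℝ) (33/25), Real.exp (-(729/1000) * Real.cosh t)) ≤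
      299629/10000000 :=
    le_trans (cell_bound (by norm_num) (by norm_num) (by norm_num)
      (cosh_ge (C := 19045377/10000000) (by norm_num) (by norm_num) (by norm_num [P7, P8]))
      (sinh_le (S := 8104419/5000000) (by norm_num) (by norm_num) (by norm_num [P7, P8]))
      (by norm_num)
      (exp_neg_le (by norm_num) (E := 249481/1000000) (by norm_num))) (by norm_num)
  have h10 : (∫ t in Ioi (6/5:ℝ), Real.exp (-(729/1000) * Real.cosh t)) ≤ 1053896663/7290000000 := by
    rw [split_Ioi (33/25) (by norm_num) (integrableOn_K0 (by norm_num) (by norm_num))]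
    exact le_trans (add_le_add c10 h11) (by norm_num)
  have c9 : (∫ t in Ioc (27/25 : ℝ) (6/5), Real.exp (-(729/1000) * Real.cosh t)) ≤
      85469/2500000 :=
    le_trans (cell_bound (by norm_num) (by norm_num) (by norm_num)
      (cosh_ge (C := 2154117/1250000) (by norm_num) (by norm_num) (by norm_num [P7, P8]))
      (sinh_le (S := 14034747/10000000) (by norm_num) (by norm_num) (by norm_num [P7, P8]))
      (by norm_num)
      (exp_neg_le (by norm_num) (E := 2847177/10000000) (by norm_num))) (by norm_num)
  have h9 : (∫ t in Ioi (27/25:ℝ), Real.exp (-(729/1000) * Real.cosh t)) ≤ 1303124267/7290000000 := by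
    rw [split_Ioi (6/5) (by norm_num) (integrableOn_K0 (by norm_num) (by norm_num))]
    exact le_trans (add_le_add c9 h10) (by norm_num)
  have c8 : (∫ t in Ioc (24/25 : ℝ) (27/25), Real.exp (-(729/1000) * Real.cosh t)) ≤
      383099/10000000 :=
    le_trans (cell_bound (by norm_num) (by norm_num) (by norm_num)
      (cosh_ge (C := 3917237/2500000) (by norm_num) (by norm_num) (by norm_num [P7, P8]))
      (sinh_le (S := 12063/10000) (by norm_num) (by norm_num) (by norm_num [P7, P8]))
      (by norm_num)
      (exp_neg_le (by norm_num) (E := 3191003/10000000) (by norm_num))) (by norm_num)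
  have h8 : (∫ t in Ioi (24/25:ℝ), Real.exp (-(729/1000) * Real.cosh t)) ≤ 791201719/3645000000 := by
    rw [split_Ioi (27/25) (by norm_num) (integrableOn_K0 (by norm_num) (by norm_num))]
    exact le_trans (add_le_add c8 h9) (by norm_num)
  have c7 : (∫ t in Ioc (21/25 : ℝ) (24/25), Real.exp (-(729/1000) * Real.cosh t)) ≤
      52787/1250000 :=
    le_trans (cell_bound (by norm_num) (by norm_num) (by norm_num)
      (cosh_ge (C := 14330863/10000000) (by norm_num) (by norm_num) (by norm_num [P7, P8]))
      (sinh_le (S := 641573/625000) (by norm_num) (by norm_num) (by norm_num [P7, P8]))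
      (by norm_num)
      (exp_neg_le (by norm_num) (E := 439743/1250000) (by norm_num))) (by norm_num)
  have h7 : (∫ t in Ioi (21/25:ℝ), Real.exp (-(729/1000) * Real.cosh t)) ≤ 945128611/3645000000 := by
    rw [split_Ioi (24/25) (by norm_num) (integrableOn_K0 (by norm_num) (by norm_num))]
    exact le_trans (add_le_add c7 h8) (by norm_num)
  have c6 : (∫ t in Ioc (18/25 : ℝ) (21/25), Real.exp (-(729/1000) * Real.cosh t)) ≤
      229279/5000000 :=
    le_trans (cell_bound (by norm_num) (by norm_num) (by norm_num)
      (cosh_ge (C := 13199391/10000000) (by norm_num) (by norm_num) (by norm_num [P7, P8]))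
      (sinh_le (S := 2153833/2500000) (by norm_num) (by norm_num) (by norm_num [P7, P8]))
      (by norm_num)
      (exp_neg_le (by norm_num) (E := 3820411/10000000) (by norm_num))) (by norm_num)
  have h6 : (∫ t in Ioi (18/25:ℝ), Real.exp (-(729/1000) * Real.cosh t)) ≤ 556136501/1822500000 := by
    rw [split_Ioi (21/25) (by norm_num) (integrableOn_K0 (by norm_num) (by norm_num))]
    exact le_trans (add_le_add c6 h7) (by norm_num)
  have c5 : (∫ t in Ioc (3/5 : ℝ) (18/25), Real.exp (-(729/1000) * Real.cosh t)) ≤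
      491087/10000000 :=
    le_trans (cell_bound (by norm_num) (by norm_num) (by norm_num)
      (cosh_ge (C := 6129109/5000000) (by norm_num) (by norm_num) (by norm_num [P7, P8]))
      (sinh_le (S := 1417941/2000000) (by norm_num) (by norm_num) (by norm_num [P7, P8]))
      (by norm_num)
      (exp_neg_le (by norm_num) (E := 255733/625000) (by norm_num))) (by norm_num)
  have h5 : (∫ t in Ioi (3/5:ℝ), Real.exp (-(729/1000) * Real.cosh t)) ≤ 2582548427/7290000000 := by
    rw [split_Ioi (18/25) (by norm_num) (integrableOn_K0 (by norm_num) (by norm_num))]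
    exact le_trans (add_le_add c5 h6) (by norm_num)
  have c4 : (∫ t in Ioc (12/25 : ℝ) (3/5), Real.exp (-(729/1000) * Real.cosh t)) ≤
      649/12500 :=
    le_trans (cell_bound (by norm_num) (by norm_num) (by norm_num)
      (cosh_ge (C := 459751/400000) (by norm_num) (by norm_num) (by norm_num [P7, P8]))
      (sinh_le (S := 2833147/5000000) (by norm_num) (by norm_num) (by norm_num [P7, P8]))
      (by norm_num)
      (exp_neg_le (by norm_num) (E := 2163109/5000000) (by norm_num))) (by norm_num)
  have h4 : (∫ t in Ioi (12/25:ℝ), Real.exp (-(729/1000) * Real.cosh t)) ≤ 2961045227/7290000000 := by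
    rw [split_Ioi (3/5) (by norm_num) (integrableOn_K0 (by norm_num) (by norm_num))]
    exact le_trans (add_le_add c4 h5) (by norm_num)
  have c3 : (∫ t in Ioc (9/25 : ℝ) (12/25), Real.exp (-(729/1000) * Real.cosh t)) ≤
      27117/500000 :=
    le_trans (cell_bound (by norm_num) (by norm_num) (by norm_num)
      (cosh_ge (C := 10895041/10000000) (by norm_num) (by norm_num) (by norm_num [P7, P8]))
      (sinh_le (S := 2162287/5000000) (by norm_num) (by norm_num) (by norm_num [P7, P8]))
      (by norm_num)
      (exp_neg_le (by norm_num) (E := 180769/400000) (by norm_num))) (by norm_num)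
  have h3 : (∫ t in Ioi (9/25:ℝ), Real.exp (-(729/1000) * Real.cosh t)) ≤ 3356411087/7290000000 := by
    rw [split_Ioi (12/25) (by norm_num) (integrableOn_K0 (by norm_num) (by norm_num))]
    exact le_trans (add_le_add c3 h4) (by norm_num)
  have c2 : (∫ t in Ioc (6/25 : ℝ) (9/25), Real.exp (-(729/1000) * Real.cosh t)) ≤
      140017/2500000 :=
    le_trans (cell_bound (by norm_num) (by norm_num) (by norm_num)
      (cosh_ge (C := 2090677/2000000) (by norm_num) (by norm_num) (by norm_num [P7, P8]))
      (sinh_le (S := 3045203/10000000) (by norm_num) (by norm_num) (by norm_num [P7, P8]))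
      (by norm_num)
      (exp_neg_le (by norm_num) (E := 933419/2000000) (by norm_num))) (by norm_num)
  have h2 : (∫ t in Ioi (6/25:ℝ), Real.exp (-(729/1000) * Real.cosh t)) ≤ 3764700659/7290000000 := by
    rw [split_Ioi (9/25) (by norm_num) (integrableOn_K0 (by norm_num) (by norm_num))]
    exact le_trans (add_le_add c2 h3) (by norm_num)
  have c1 : (∫ t in Ioc (3/25 : ℝ) (6/25), Real.exp (-(729/1000) * Real.cosh t)) ≤
      572063/10000000 :=
    le_trans (cell_bound (by norm_num) (by norm_num) (by norm_num)
      (cosh_ge (C := 10162437/10000000) (by norm_num) (by norm_num) (by norm_num [P7, P8]))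
      (sinh_le (S := 226217/1250000) (by norm_num) (by norm_num) (by norm_num [P7, P8]))
      (by norm_num)
      (exp_neg_le (by norm_num) (E := 238357/500000) (by norm_num))) (by norm_num)
  have h1 : (∫ t in Ioi (3/25:ℝ), Real.exp (-(729/1000) * Real.cosh t)) ≤ 2090867293/3645000000 := by
    rw [split_Ioi (6/25) (by norm_num) (integrableOn_K0 (by norm_num) (by norm_num))]
    exact le_trans (add_le_add c1 h2) (by norm_num)
  have c0 : (∫ t in Ioc (0 : ℝ) (3/25), Real.exp (-(729/1000) * Real.cosh t)) ≤
      578113/10000000 :=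
    le_trans (cell_bound (by norm_num) (by norm_num) (by norm_num)
      (cosh_ge (C := 2003601/2000000) (by norm_num) (by norm_num) (by norm_num [P7, P8]))
      (sinh_le (S := 600361/10000000) (by norm_num) (by norm_num) (by norm_num [P7, P8]))
      (by norm_num)
      (exp_neg_le (by norm_num) (E := 2408799/5000000) (by norm_num))) (by norm_num)
  have h0 : (∫ t in Ioi (0:ℝ), Real.exp (-(729/1000) * Real.cosh t)) ≤ 4603178963/7290000000 := by
    rw [split_Ioi (3/25) (by norm_num) (integrableOn_K0 (by norm_num) (by norm_num))]
    exact le_trans (add_le_add c0 h1) (by norm_num)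
  exact le_trans h0 (by norm_num)

/-- For `0 < x < 0.729`: `K_0(x) < -2 log x`. -/
theorem besselK0_lt_neg_two_log (x : ℝ) (hx0 : 0 < x) (hx1 : x < 0.729) :
    besselK0 x < -2 * Real.log x := by
  have hx729 : x < 729/1000 := by norm_num at hx1 ⊢; linarith
  have h1 := K0_shift hx0 hx729.le
  have h2 := K0_numeric
  have h3 := log_numeric
  have h4 : Real.log x < Real.log (729/1000) := Real.log_lt_log hx0 hx729
  simp only [besselK0]
  linarith
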